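/- Let Σ ∈ ℝ^{p×p} be symmetric positive semidefinite with unit diagonal, let s ≥ 1, R ∈ [1,∞) and δ' ∈ [0,1). Define the pairwise incoherence δ_PW(Σ) := max_{i≠j} |Σ_{ij}|. If δ_PW(Σ) < (1−δ')/(2R(s−1)+1), then Σ ∈ MRI_S(δ'; R) for every nonempty subset S ⊆ {1,…,p} with |S| ≤ s. -/
import Mathlib


open Matrix BigOperators

noncomputable section

/-- MR incoherence condition `Σ ∈ MRI_S(δ'; R)`. -/
def MRI {p : ℕ} (Sig : Matrix (Fin p) (Fin p) ℝ) (S : Finset (Fin p)) (δ' R : ℝ) : Prop :=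
  ∀ j ∈ S, ∀ k ∉ S,
    (R / (1 + R)) * (∑ j' ∈ S, |Sig j' j + Sig j' k|) + δ' / (1 + R) < Sig j j + Sig j k ∧
    (R / (1 + R)) * (∑ j' ∈ S, |Sig j' j - Sig j' k|) + δ' / (1 + R) < Sig j j - Sig j k

/-- Proposition (pairwise incoherence implies MRI): if
`δ_PW(Σ) = max_{i ≠ j} |Σ_{ij}| < (1-δ')/(2R(s-1)+1)`, then MR incoherence with
parameters `δ'` and `R` holds for every nonempty support of size at most `s`. -/
theorem pwi_implies_mri {p : ℕ} (Sig : Matrix (Fin p) (Fin p) ℝ)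
    (hSym : Sig.IsSymm) (hPSD : Sig.PosSemidef) (hdiag : ∀ i, Sig i i = 1)
    (s : ℕ) (hs : 1 ≤ s) (R δ' : ℝ) (hR : 1 ≤ R) (hδ'0 : 0 ≤ δ') (hδ'1 : δ' < 1)
    (hPW : ∀ i j : Fin p, i ≠ j →
      |Sig i j| < (1 - δ') / (2 * R * ((s : ℝ) - 1) + 1)) :
    ∀ S : Finset (Fin p), S.Nonempty → S.card ≤ s → MRI Sig S δ' R := by
  intro S _ hScard j hj k hk
  have hs1 : (1:ℝ) ≤ (s:ℝ) := by exact_mod_cast hs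
  set D : ℝ := 2 * R * ((s : ℝ) - 1) + 1 with hDdef
  have hD1 : (1:ℝ) ≤ D := by nlinarith
  have hD0 : (0:ℝ) < D := by linarith
  set c : ℝ := (1 - δ') / D with hcdef
  have hc0 : 0 < c := div_pos (by linarith) hD0
  have hcD : c * D = 1 - δ' := by
    rw [hcdef]; field_simp
  have hc1 : c ≤ 1 := by
    rw [hcdef, div_le_one hD0]; linarith
  have hjk : j ≠ k := fun h => hk (h ▸ hj)
  have hb : |Sig j k| < c := hPW j k hjk
  -- cardinality of S.erase j
  have hcard : ((S.erase j).card : ℝ) ≤ (s:ℝ) - 1 := by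
    have h1 : 1 ≤ S.card := Finset.card_pos.mpr ⟨j, hj⟩
    have h2 : (S.erase j).card + 1 ≤ s := by
      rw [Finset.card_erase_of_mem hj]; omega
    have := (Nat.cast_le (α := ℝ)).mpr h2
    push_cast at this
    linarith
  have hR0 : (0:ℝ) < 1 + R := by linarith
  have main : ∀ ε : ℝ, |ε| = 1 →
      (R / (1 + R)) * (∑ j' ∈ S, |Sig j' j + ε * Sig j' k|) + δ' / (1 + R)
        < Sig j j + ε * Sig j k := by
    intro ε hε
    have hεb : |ε * Sig j k| < c := by
      rw [abs_mul, hε, one_mul]; exact hb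
    have hεb' := abs_lt.mp hεb
    have hpos : 0 < 1 + ε * Sig j k := by linarith
    have hsum : ∑ j' ∈ S, |Sig j' j + ε * Sig j' k|
        ≤ (1 + ε * Sig j k) + ((s:ℝ) - 1) * (2 * c) := by
      rw [← Finset.add_sum_erase S _ hj]
      have h1 : |Sig j j + ε * Sig j k| = 1 + ε * Sig j k := by
        rw [hdiag j]; exact abs_of_pos hpos
      have h2 : ∑ j' ∈ S.erase j, |Sig j' j + ε * Sig j' k| ≤ ((s:ℝ)-1) * (2*c) := by
        calc ∑ j' ∈ S.erase j, |Sig j' j + ε * Sig j' k|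
            ≤ ((S.erase j).card : ℝ) * (2*c) := by
              have hterm : ∀ x ∈ S.erase j, |Sig x j + ε * Sig x k| ≤ 2*c := by
                intro x hx
                have hxj : x ≠ j := Finset.ne_of_mem_erase hx
                have hxS : x ∈ S := Finset.mem_of_mem_erase hx
                have hxk : x ≠ k := fun h => hk (h ▸ hxS)
                have h3 : |ε * Sig x k| < c := by
                  rw [abs_mul, hε, one_mul]; exact hPW x k hxk
                calc |Sig x j + ε * Sig x k| ≤ |Sig x j| + |ε * Sig x k| := abs_add_le _ _
                  _ ≤ 2*c := by have := hPW x j hxj; linarith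
              have := Finset.sum_le_card_nsmul (S.erase j) _ (2*c) hterm
              simpa [nsmul_eq_mul] using this
          _ ≤ ((s:ℝ)-1) * (2*c) := by
              apply mul_le_mul_of_nonneg_right hcard (by linarith)
      linarith
    rw [hdiag j]
    have heq : R / (1 + R) * (∑ j' ∈ S, |Sig j' j + ε * Sig j' k|) + δ' / (1 + R)
        = (R * (∑ j' ∈ S, |Sig j' j + ε * Sig j' k|) + δ') / (1 + R) := by
      field_simp
    rw [heq, div_lt_iff₀ hR0]
    have hkey : R * (((s:ℝ) - 1) * (2 * c)) = 1 - δ' - c := by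
      linear_combination hcD
    nlinarith [mul_le_mul_of_nonneg_left hsum (by linarith : (0:ℝ) ≤ R)]
  constructor
  · have h1 := main 1 (by norm_num)
    simpa using h1
  · have h2 := main (-1) (by norm_num)
    simpa [neg_one_mul, ← sub_eq_add_neg] using h2
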